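/- Let τ ∈ ℂ with Im τ > 0 and μ ∈ (0,1). The series ℘_μ(w) = ∑_{m∈ℤ} e^{iπ(μ-1)m} · π²/sin²(π(w + mτ)) converges absolutely for every w ∈ ℂ with w + mτ ∉ ℤ for all m ∈ ℤ, and defines a function satisfying ℘_μ(w+1) = ℘_μ(w) and ℘_μ(w+τ) = e^{iπ(1-μ)} ℘_μ(w). -/

import Mathlib

open Complex

/-- The twisted Weierstrass series `℘_μ(w) = ∑_{m∈ℤ} e^{iπ(μ-1)m} π²/sin²(π(w+mτ))`
converges absolutely at every admissible point `w` (i.e. `w + mτ ∉ ℤ` for all `m`), and the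
resulting function satisfies `℘_μ(w+1) = ℘_μ(w)` and `℘_μ(w+τ) = e^{iπ(1-μ)} ℘_μ(w)`. -/

lemma sinh_le_norm_sin (z : ℂ) : Real.sinh |z.im| ≤ ‖Complex.sin z‖ := by
  rw [← Real.abs_sinh, Real.sinh_eq]
  have hdef : Complex.sin z = (Complex.exp (-z * I) - Complex.exp (z * I)) * I / 2 := rfl
  rw [hdef]
  have h1 : ‖Complex.exp (-z * I)‖ = Real.exp z.im := by
    rw [Complex.norm_exp]; simp
  have h2 : ‖Complex.exp (z * I)‖ = Real.exp (-z.im) := by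
    rw [Complex.norm_exp]; simp
  have h3 : |Real.exp z.im - Real.exp (-z.im)| ≤ ‖Complex.exp (-z * I) - Complex.exp (z * I)‖ := by
    rw [← h1, ← h2]; exact abs_norm_sub_norm_le _ _
  rw [norm_div, norm_mul, Complex.norm_I, mul_one]
  simp only [Complex.norm_ofNat]
  calc |(Real.exp z.im - Real.exp (-z.im)) / 2|
      = |Real.exp z.im - Real.exp (-z.im)| / 2 := by rw [abs_div]; norm_num
    _ ≤ _ := div_le_div_of_nonneg_right h3 (by norm_num)

lemma exp_div_three_le_sinh {t : ℝ} (ht : 1 ≤ t) : Real.exp t / 3 ≤ Real.sinh t := by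
  rw [Real.sinh_eq]
  have hprod : Real.exp (-t) * Real.exp t = 1 := by rw [← Real.exp_add]; simp
  have hge : 2 ≤ Real.exp t := by linarith [Real.add_one_le_exp t]
  have hpos : 0 < Real.exp (-t) := Real.exp_pos _
  nlinarith [hprod, hge, hpos]

lemma exp_div_three_le_norm_sin {z : ℂ} (hz : 1 ≤ |z.im|) :
    Real.exp |z.im| / 3 ≤ ‖Complex.sin z‖ :=
  (exp_div_three_le_sinh hz).trans (sinh_le_norm_sin z)

lemma twisted_summable (τ : ℂ) (hτ : 0 < τ.im) (μ : ℝ) (w : ℂ) :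
    Summable (fun m : ℤ =>
      ‖Complex.exp (Real.pi * Complex.I * ((μ : ℂ) - 1) * m) * (Real.pi : ℂ) ^ 2 /
        Complex.sin (Real.pi * (w + m * τ)) ^ 2‖) := by
  set r : ℝ := Real.exp (-(2 * Real.pi * τ.im)) with hr_def
  have hr0 : 0 ≤ r := (Real.exp_pos _).le
  have hr1 : r < 1 := by
    rw [hr_def, Real.exp_lt_one_iff]
    have := Real.pi_pos
    nlinarith
  set C : ℝ := 9 * Real.pi ^ 2 * Real.exp (2 * Real.pi * |w.im|) with hC_def
  have hC0 : 0 ≤ C := by positivity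
  have hgeo : Summable (fun n : ℕ => C * r ^ n) :=
    (summable_geometric_of_lt_one hr0 hr1).mul_left C
  have hg : Summable (fun m : ℤ => C * r ^ m.natAbs) := by
    apply Summable.of_nat_of_neg_add_one
    · simpa using hgeo
    · have h6 : ∀ n : ℕ, ((-1 + -(n:ℤ)).natAbs) = n + 1 := by intro n; omega
      have h7 : Summable (fun n : ℕ => C * r ^ (n + 1)) :=
        hgeo.comp_injective (add_left_injective 1)
      simpa [h6] using h7
  apply Summable.of_norm_bounded_eventually (g := fun m : ℤ => C * r ^ m.natAbs) hg
  have hfin : {m : ℤ | ¬ (1 ≤ Real.pi * |w.im + (m : ℝ) * τ.im|)}.Finite := by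
    apply Set.Finite.subset (Set.finite_Icc (-⌈(1 + |w.im|) / τ.im⌉) ⌈(1 + |w.im|) / τ.im⌉)
    intro m hm
    simp only [Set.mem_setOf_eq, not_le] at hm
    have hπ1 : (1:ℝ) ≤ Real.pi := by linarith [Real.pi_gt_three]
    have habs : |w.im + (m : ℝ) * τ.im| < 1 := by
      nlinarith [abs_nonneg (w.im + (m : ℝ) * τ.im)]
    have hkey : |(m : ℝ)| * τ.im - |w.im| ≤ |w.im + (m : ℝ) * τ.im| := by
      have h : |(m : ℝ) * τ.im| ≤ |w.im + (m : ℝ) * τ.im| + |w.im| := by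
        calc |(m : ℝ) * τ.im| = |(w.im + (m : ℝ) * τ.im) + (-w.im)| := by ring_nf
          _ ≤ |w.im + (m : ℝ) * τ.im| + |(-w.im)| := abs_add_le _ _
          _ = |w.im + (m : ℝ) * τ.im| + |w.im| := by rw [abs_neg]
      rw [abs_mul, abs_of_pos hτ] at h
      linarith
    have hmB : |(m : ℝ)| ≤ (1 + |w.im|) / τ.im := by
      rw [le_div_iff₀ hτ]
      nlinarith
    have hceil : ((⌈(1 + |w.im|) / τ.im⌉ : ℤ) : ℝ) ≥ (1 + |w.im|) / τ.im := Int.le_ceil _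
    constructor
    · rw [neg_le]
      have h5 : (-(m : ℝ)) ≤ ((⌈(1 + |w.im|) / τ.im⌉ : ℤ) : ℝ) := by
        have := neg_abs_le (m : ℝ); linarith
      exact_mod_cast h5
    · have : ((m : ℝ)) ≤ ((⌈(1 + |w.im|) / τ.im⌉ : ℤ) : ℝ) := by
        have := le_abs_self (m : ℝ); linarith
      exact_mod_cast this
  filter_upwards [Filter.eventually_cofinite.mpr hfin] with m hm
  rw [norm_norm]
  -- now bound the term
  set z : ℂ := (Real.pi : ℂ) * (w + (m : ℂ) * τ) with hz_def
  have hzim : z.im = Real.pi * (w.im + (m : ℝ) * τ.im) := by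
    simp [hz_def, Complex.add_im, Complex.mul_im]
  have ht : |z.im| = Real.pi * |w.im + (m : ℝ) * τ.im| := by
    rw [hzim, abs_mul, abs_of_pos Real.pi_pos]
  have h1t : 1 ≤ |z.im| := by rw [ht]; exact hm
  have hsin := exp_div_three_le_norm_sin h1t
  have hsin0 : (0:ℝ) < Real.exp |z.im| / 3 := by positivity
  have hnorm_exp : ‖Complex.exp (Real.pi * Complex.I * ((μ : ℂ) - 1) * m)‖ = 1 := by
    rw [Complex.norm_exp]
    convert Real.exp_zero using 2
    simp [Complex.mul_re, Complex.mul_im]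
  have hterm : ‖Complex.exp (Real.pi * Complex.I * ((μ : ℂ) - 1) * m) * (Real.pi : ℂ) ^ 2 /
      Complex.sin z ^ 2‖ = Real.pi ^ 2 / ‖Complex.sin z‖ ^ 2 := by
    rw [norm_div, norm_mul, hnorm_exp, one_mul, norm_pow, norm_pow]
    congr 1
    rw [Complex.norm_real, Real.norm_eq_abs, abs_of_pos Real.pi_pos]
  rw [hterm]
  have hb : (Real.exp |z.im| / 3) ^ 2 ≤ ‖Complex.sin z‖ ^ 2 :=
    pow_le_pow_left₀ hsin0.le hsin 2
  have h1 : Real.pi ^ 2 / ‖Complex.sin z‖ ^ 2 ≤ Real.pi ^ 2 / (Real.exp |z.im| / 3) ^ 2 :=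
    div_le_div_of_nonneg_left (by positivity) (by positivity) hb
  have h2 : Real.pi ^ 2 / (Real.exp |z.im| / 3) ^ 2
      = 9 * Real.pi ^ 2 * Real.exp (-(2 * |z.im|)) := by
    rw [show -(2 * |z.im|) = (-|z.im|) + (-|z.im|) by ring, Real.exp_add, Real.exp_neg]
    field_simp
    ring
  have hm_abs : ((m.natAbs : ℝ)) = |(m : ℝ)| := by
    rw [Nat.cast_natAbs]; push_cast; ring
  have h3 : Real.exp (-(2 * |z.im|)) ≤ Real.exp (2 * Real.pi * |w.im|) * r ^ m.natAbs := by
    have hrn : r ^ m.natAbs = Real.exp ((m.natAbs : ℝ) * (-(2 * Real.pi * τ.im))) := by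
      rw [Real.exp_nat_mul]
    rw [hrn, ← Real.exp_add, Real.exp_le_exp, hm_abs]
    have hkey : |(m : ℝ)| * τ.im - |w.im| ≤ |w.im + (m : ℝ) * τ.im| := by
      have h : |(m : ℝ) * τ.im| ≤ |w.im + (m : ℝ) * τ.im| + |w.im| := by
        calc |(m : ℝ) * τ.im| = |(w.im + (m : ℝ) * τ.im) + (-w.im)| := by ring_nf
          _ ≤ |w.im + (m : ℝ) * τ.im| + |(-w.im)| := abs_add_le _ _
          _ = |w.im + (m : ℝ) * τ.im| + |w.im| := by rw [abs_neg]
      rw [abs_mul, abs_of_pos hτ] at h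
      linarith
    rw [ht]
    nlinarith [Real.pi_pos]
  calc Real.pi ^ 2 / ‖Complex.sin z‖ ^ 2
      ≤ 9 * Real.pi ^ 2 * Real.exp (-(2 * |z.im|)) := h1.trans_eq h2
    _ ≤ 9 * Real.pi ^ 2 * (Real.exp (2 * Real.pi * |w.im|) * r ^ m.natAbs) := by
        apply mul_le_mul_of_nonneg_left h3 (by positivity)
    _ = C * r ^ m.natAbs := by rw [hC_def]; ring

theorem stmt6 (τ : ℂ) (hτ : 0 < τ.im) (μ : ℝ) (hμ : μ ∈ Set.Ioo (0 : ℝ) 1)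
    (w : ℂ) (hw : ∀ m k : ℤ, w + m * τ ≠ k) :
    Summable (fun m : ℤ =>
      ‖Complex.exp (Real.pi * Complex.I * ((μ : ℂ) - 1) * m) * (Real.pi : ℂ) ^ 2 /
        Complex.sin (Real.pi * (w + m * τ)) ^ 2‖) ∧
    (∑' m : ℤ, Complex.exp (Real.pi * Complex.I * ((μ : ℂ) - 1) * m) * (Real.pi : ℂ) ^ 2 /
        Complex.sin (Real.pi * ((w + 1) + m * τ)) ^ 2)
      = (∑' m : ℤ, Complex.exp (Real.pi * Complex.I * ((μ : ℂ) - 1) * m) * (Real.pi : ℂ) ^ 2 /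
          Complex.sin (Real.pi * (w + m * τ)) ^ 2) ∧
    (∑' m : ℤ, Complex.exp (Real.pi * Complex.I * ((μ : ℂ) - 1) * m) * (Real.pi : ℂ) ^ 2 /
        Complex.sin (Real.pi * ((w + τ) + m * τ)) ^ 2)
      = Complex.exp (Real.pi * Complex.I * (1 - (μ : ℂ))) *
        (∑' m : ℤ, Complex.exp (Real.pi * Complex.I * ((μ : ℂ) - 1) * m) * (Real.pi : ℂ) ^ 2 /
          Complex.sin (Real.pi * (w + m * τ)) ^ 2) := by
  refine ⟨twisted_summable τ hτ μ w, ?_, ?_⟩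
  · apply tsum_congr
    intro m
    have h : (Real.pi : ℂ) * ((w + 1) + m * τ) = Real.pi * (w + m * τ) + Real.pi := by ring
    rw [h, Complex.sin_add_pi, neg_sq]
  · set f : ℤ → ℂ := fun m => Complex.exp (Real.pi * Complex.I * ((μ : ℂ) - 1) * m) *
      (Real.pi : ℂ) ^ 2 / Complex.sin (Real.pi * (w + m * τ)) ^ 2 with hf
    have key : ∀ m : ℤ,
        Complex.exp (Real.pi * Complex.I * ((μ : ℂ) - 1) * m) * (Real.pi : ℂ) ^ 2 /
          Complex.sin (Real.pi * ((w + τ) + m * τ)) ^ 2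
        = Complex.exp (Real.pi * Complex.I * (1 - (μ : ℂ))) * f (m + 1) := by
      intro m
      have hcast : ((m + 1 : ℤ) : ℂ) = (m : ℂ) + 1 := by push_cast; ring
      have harg : (Real.pi : ℂ) * (w + ((m : ℂ) + 1) * τ) = Real.pi * ((w + τ) + m * τ) := by
        ring
      have hexp : Complex.exp (Real.pi * Complex.I * ((μ : ℂ) - 1) * m)
          = Complex.exp (Real.pi * Complex.I * (1 - (μ : ℂ))) *
            Complex.exp (Real.pi * Complex.I * ((μ : ℂ) - 1) * ((m : ℂ) + 1)) := by
        rw [← Complex.exp_add]; congr 1; ring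
      rw [hf]
      simp only [hcast, harg]
      rw [hexp]
      ring
    rw [tsum_congr key, tsum_mul_left]
    congr 1
    have := (Equiv.addRight (1 : ℤ)).tsum_eq f
    simpa using this
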